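/- The abelianization Fbr/[Fbr,Fbr] of the braided Thompson group Fbr is generated by the images of the four elements x_0, x_1, β_{1,3} and α_{1,2}. -/

import Mathlib

namespace BrThompson

/-- Generators of the braided Thompson group `Fbr`: `x i` for `i ≥ 0`,
and `a i j`, `b i j` (the α- and β-generators) for `1 ≤ i < j`. -/
inductive FbrGen : Type
  | x : ℕ → FbrGen
  | a : (i j : ℕ) → 1 ≤ i → i < j → FbrGen
  | b : (i j : ℕ) → 1 ≤ i → i < j → FbrGen

/-- The generator `x i` as an element of the free group. -/
def xg (i : ℕ) : FreeGroup FbrGen := FreeGroup.of (FbrGen.x i)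

/-- The generator `α i j` as an element of the free group (junk value `1` for invalid indices). -/
def ag (i j : ℕ) : FreeGroup FbrGen :=
  if h : 1 ≤ i ∧ i < j then FreeGroup.of (FbrGen.a i j h.1 h.2) else 1

/-- The generator `β i j` as an element of the free group (junk value `1` for invalid indices). -/
def bg (i j : ℕ) : FreeGroup FbrGen :=
  if h : 1 ≤ i ∧ i < j then FreeGroup.of (FbrGen.b i j h.1 h.2) else 1

/-- The defining relations of `Fbr`, each written as a word that is set equal to `1`,
namely `u * v⁻¹` for a relation `u = v`. -/
inductive IsFbrRel : FreeGroup FbrGen → Prop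
  | relA (i j : ℕ) (h : i < j) :
      IsFbrRel (xg j * xg i * (xg i * xg (j + 1))⁻¹)
  | relB1a (r s i j : ℕ) (h0 : 1 ≤ r) (h1 : r < s) (h2 : s < i) (h3 : i < j) :
      IsFbrRel ((ag r s)⁻¹ * ag i j * ag r s * (ag i j)⁻¹)
  | relB1b (i r s j : ℕ) (h0 : 1 ≤ i) (h1 : i < r) (h2 : r < s) (h3 : s < j) :
      IsFbrRel ((ag r s)⁻¹ * ag i j * ag r s * (ag i j)⁻¹)
  | relB2 (r i j : ℕ) (h0 : 1 ≤ r) (h1 : r < i) (h2 : i < j) :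
      IsFbrRel ((ag r i)⁻¹ * ag i j * ag r i * (ag r j * ag i j * (ag r j)⁻¹)⁻¹)
  | relB3 (i s j : ℕ) (h0 : 1 ≤ i) (h1 : i < s) (h2 : s < j) :
      IsFbrRel ((ag i s)⁻¹ * ag i j * ag i s *
        (ag i j * ag s j * ag i j * (ag i j * ag s j)⁻¹)⁻¹)
  | relB4 (r i s j : ℕ) (h0 : 1 ≤ r) (h1 : r < i) (h2 : i < s) (h3 : s < j) :
      IsFbrRel ((ag r s)⁻¹ * ag i j * ag r s *
        (ag r j * ag s j * (ag r j)⁻¹ * (ag s j)⁻¹ * ag i j *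
          (ag r j * ag s j * (ag r j)⁻¹ * (ag s j)⁻¹)⁻¹)⁻¹)
  | relB5a (r s i j : ℕ) (h0 : 1 ≤ r) (h1 : r < s) (h2 : s < i) (h3 : i < j) :
      IsFbrRel ((ag r s)⁻¹ * bg i j * ag r s * (bg i j)⁻¹)
  | relB5b (i r s j : ℕ) (h0 : 1 ≤ i) (h1 : i < r) (h2 : r < s) (h3 : s < j) :
      IsFbrRel ((ag r s)⁻¹ * bg i j * ag r s * (bg i j)⁻¹)
  | relB6 (r i j : ℕ) (h0 : 1 ≤ r) (h1 : r < i) (h2 : i < j) :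
      IsFbrRel ((ag r i)⁻¹ * bg i j * ag r i * (bg r j * bg i j * (bg r j)⁻¹)⁻¹)
  | relB7 (i s j : ℕ) (h0 : 1 ≤ i) (h1 : i < s) (h2 : s < j) :
      IsFbrRel ((ag i s)⁻¹ * bg i j * ag i s *
        (bg i j * bg s j * bg i j * (bg i j * bg s j)⁻¹)⁻¹)
  | relB8 (r i s j : ℕ) (h0 : 1 ≤ r) (h1 : r < i) (h2 : i < s) (h3 : s < j) :
      IsFbrRel ((ag r s)⁻¹ * bg i j * ag r s *
        (bg r j * bg s j * (bg r j)⁻¹ * (bg s j)⁻¹ * bg i j *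
          (bg r j * bg s j * (bg r j)⁻¹ * (bg s j)⁻¹)⁻¹)⁻¹)
  | relC (i j : ℕ) (h0 : 1 ≤ i) (h1 : i < j) :
      IsFbrRel (bg i j * (bg i (j + 1) * ag i j)⁻¹)
  | relD1 (k i j : ℕ) (h0 : 1 ≤ k) (h1 : k < i) (h2 : i < j) :
      IsFbrRel (ag i j * xg (k - 1) * (xg (k - 1) * ag (i + 1) (j + 1))⁻¹)
  | relD2 (i j : ℕ) (h0 : 1 ≤ i) (h1 : i < j) :
      IsFbrRel (ag i j * xg (i - 1) * (xg (i - 1) * ag (i + 1) (j + 1) * ag i (j + 1))⁻¹)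
  | relD3 (i k j : ℕ) (h0 : 1 ≤ i) (h1 : i < k) (h2 : k < j) :
      IsFbrRel (ag i j * xg (k - 1) * (xg (k - 1) * ag i (j + 1))⁻¹)
  | relD4 (i j : ℕ) (h0 : 1 ≤ i) (h1 : i < j) :
      IsFbrRel (ag i j * xg (j - 1) * (xg (j - 1) * ag i (j + 1) * ag i j)⁻¹)
  | relD5 (i j k : ℕ) (h0 : 1 ≤ i) (h1 : i < j) (h2 : j < k) :
      IsFbrRel (ag i j * xg (k - 1) * (xg (k - 1) * ag i j)⁻¹)
  | relD6 (k i j : ℕ) (h0 : 1 ≤ k) (h1 : k < i) (h2 : i < j) :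
      IsFbrRel (bg i j * xg (k - 1) * (xg (k - 1) * bg (i + 1) (j + 1))⁻¹)
  | relD7 (i j : ℕ) (h0 : 1 ≤ i) (h1 : i < j) :
      IsFbrRel (bg i j * xg (i - 1) * (xg (i - 1) * bg (i + 1) (j + 1) * bg i (j + 1))⁻¹)
  | relD8 (i k j : ℕ) (h0 : 1 ≤ i) (h1 : i < k) (h2 : k < j) :
      IsFbrRel (bg i j * xg (k - 1) * (xg (k - 1) * bg i (j + 1))⁻¹)
  | relD9 (i j k : ℕ) (h0 : 1 ≤ i) (h1 : i < j) (h2 : j < k) :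
      IsFbrRel (bg i j * xg (k - 1) * (xg (k - 1) * bg i j)⁻¹)

def fbrRels : Set (FreeGroup FbrGen) := {r | IsFbrRel r}

/-- The braided Thompson group `Fbr` of Brady–Burillo–Cleary–Stein. -/
abbrev Fbr : Type := PresentedGroup fbrRels

/-- The generator `x i` of `Fbr`. -/
def x (i : ℕ) : Fbr := PresentedGroup.of (FbrGen.x i)

/-- The generator `α i j` of `Fbr` (junk value `1` for invalid indices). -/
def al (i j : ℕ) : Fbr :=
  if h : 1 ≤ i ∧ i < j then PresentedGroup.of (FbrGen.a i j h.1 h.2) else 1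

/-- The generator `β i j` of `Fbr` (junk value `1` for invalid indices). -/
def be (i j : ℕ) : Fbr :=
  if h : 1 ≤ i ∧ i < j then PresentedGroup.of (FbrGen.b i j h.1 h.2) else 1

/-! ### Auxiliary machinery for the abelianization computation -/

/-- The composite map from the free group to the abelianization of `Fbr`. -/
def psi : FreeGroup FbrGen →* Abelianization Fbr :=
  Abelianization.of.comp (QuotientGroup.mk' (Subgroup.normalClosure fbrRels))

lemma psi_xg (i : ℕ) : psi (xg i) = Abelianization.of (x i) := rfl

lemma psi_ag (i j : ℕ) : psi (ag i j) = Abelianization.of (al i j) := by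
  unfold ag al
  split
  · rfl
  · simp

lemma psi_bg (i j : ℕ) : psi (bg i j) = Abelianization.of (be i j) := by
  unfold bg be
  split
  · rfl
  · simp

lemma psi_rel {w : FreeGroup FbrGen} (h : IsFbrRel w) : psi w = 1 := by
  have h1 : (QuotientGroup.mk' (Subgroup.normalClosure fbrRels)) w = 1 := by
    rw [QuotientGroup.mk'_apply, QuotientGroup.eq_one_iff]
    exact Subgroup.subset_normalClosure h
  have h2 := congrArg Abelianization.of h1
  rw [map_one] at h2
  exact h2

lemma psi_eq {u v : FreeGroup FbrGen} (h : IsFbrRel (u * v⁻¹)) : psi u = psi v := by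
  have h1 := psi_rel h
  rwa [map_mul, map_inv, mul_inv_eq_one] at h1

section CommGroupHelpers
variable {G : Type*} [CommGroup G]

lemma hlp1 {a x c : G} (h : a * x = x * c) : a = c := by
  rw [mul_comm x c] at h; exact mul_right_cancel h

lemma hlp3 {a x b c : G} (h : a * x = x * b * c) : a = b * c := by
  rw [mul_assoc, mul_comm x (b * c)] at h
  exact mul_right_cancel h

lemma hlp2 {a x b : G} (h : a * x = x * b * a) : b = 1 :=
  right_eq_mul.mp (hlp3 h)

end CommGroupHelpers

/-- Relation (A) in the abelianization: all `x j` with `j ≥ 1` coincide. -/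
lemma eqA (j : ℕ) (hj : 1 ≤ j) : psi (xg j) = psi (xg (j + 1)) :=
  hlp1 (by simpa [map_mul] using psi_eq (IsFbrRel.relA 0 j hj))

/-- Relation (D4) in the abelianization: `α i (j+1) = 1` for `i < j`. -/
lemma eqD4 (i j : ℕ) (h0 : 1 ≤ i) (h1 : i < j) : psi (ag i (j + 1)) = 1 :=
  hlp2 (by simpa [map_mul] using psi_eq (IsFbrRel.relD4 i j h0 h1))

/-- Relation (D2) in the abelianization. -/
lemma eqD2 (i j : ℕ) (h0 : 1 ≤ i) (h1 : i < j) :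
    psi (ag i j) = psi (ag (i + 1) (j + 1)) * psi (ag i (j + 1)) :=
  hlp3 (by simpa [map_mul] using psi_eq (IsFbrRel.relD2 i j h0 h1))

/-- Relation (D6) in the abelianization. -/
lemma eqD6 (i j : ℕ) (h1 : 2 ≤ i) (h2 : i < j) :
    psi (bg i j) = psi (bg (i + 1) (j + 1)) :=
  hlp1 (by simpa [map_mul] using psi_eq (IsFbrRel.relD6 1 i j le_rfl h1 h2))

/-- Relation (D7) in the abelianization. -/
lemma eqD7 (i j : ℕ) (h0 : 1 ≤ i) (h1 : i < j) :
    psi (bg i j) = psi (bg (i + 1) (j + 1)) * psi (bg i (j + 1)) :=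
  hlp3 (by simpa [map_mul] using psi_eq (IsFbrRel.relD7 i j h0 h1))

/-- Relation (D8) in the abelianization. -/
lemma eqD8 (i k j : ℕ) (h0 : 1 ≤ i) (h1 : i < k) (h2 : k < j) :
    psi (bg i j) = psi (bg i (j + 1)) :=
  hlp1 (by simpa [map_mul] using psi_eq (IsFbrRel.relD8 i k j h0 h1 h2))

/-- Relation (C) in the abelianization. -/
lemma eqC (i j : ℕ) (h0 : 1 ≤ i) (h1 : i < j) :
    psi (bg i j) = psi (bg i (j + 1)) * psi (ag i j) := by
  simpa [map_mul] using psi_eq (IsFbrRel.relC i j h0 h1)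

/-- All `x j` with `j ≥ 1` are equal to `x 1` in the abelianization. -/
lemma fact_x : ∀ j, 1 ≤ j → psi (xg j) = psi (xg 1) := by
  intro j
  induction j with
  | zero => omega
  | succ n ih =>
    intro _
    rcases Nat.eq_or_lt_of_le (show 1 ≤ n + 1 by omega) with h | h
    · rw [← h]
    · rw [← eqA n (by omega)]; exact ih (by omega)

/-- `α i j = 1` in the abelianization when `j ≥ i + 2`. -/
lemma fact_a0 (i j : ℕ) (h0 : 1 ≤ i) (h2 : i + 2 ≤ j) : psi (ag i j) = 1 := by
  obtain ⟨m, rfl⟩ := Nat.exists_eq_add_of_le h2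
  have hj : i + 2 + m = (i + 1 + m) + 1 := by omega
  rw [hj]
  exact eqD4 i (i + 1 + m) h0 (by omega)

/-- `α i (i+1) = α (i+1) (i+2)` in the abelianization. -/
lemma stepA (i : ℕ) (h : 1 ≤ i) : psi (ag i (i + 1)) = psi (ag (i + 1) (i + 2)) := by
  have h2 := eqD2 i (i + 1) h (by omega)
  rwa [fact_a0 i (i + 2) h le_rfl, mul_one] at h2

/-- All `α i (i+1)` equal `α 1 2` in the abelianization. -/
lemma fact_a1 : ∀ i, 1 ≤ i → psi (ag i (i + 1)) = psi (ag 1 2) := by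
  intro i
  induction i with
  | zero => omega
  | succ n ih =>
    intro _
    rcases Nat.eq_or_lt_of_le (show 1 ≤ n + 1 by omega) with h | h
    · rw [← h]
    · rw [← stepA n (by omega)]; exact ih (by omega)

/-- `β 1 j = β 1 3` in the abelianization for `j ≥ 3`. -/
lemma fact_b13 : ∀ j, 3 ≤ j → psi (bg 1 j) = psi (bg 1 3) := by
  intro j
  induction j with
  | zero => omega
  | succ n ih =>
    intro h
    rcases Nat.eq_or_lt_of_le h with h' | h'
    · rw [← h']
    · rw [← eqD8 1 2 n le_rfl (by omega) (by omega)]; exact ih (by omega)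

/-- `β 2 m = 1` in the abelianization for `m ≥ 4`. -/
lemma fact_b2 (m : ℕ) (hm : 4 ≤ m) : psi (bg 2 m) = 1 := by
  obtain ⟨n, rfl⟩ : ∃ n, m = n + 1 := ⟨m - 1, by omega⟩
  have h7 := eqD7 1 n le_rfl (by omega)
  rw [fact_b13 n (by omega), fact_b13 (n + 1) (by omega)] at h7
  norm_num at h7
  exact h7

/-- `β 2 3 = α 1 2` in the abelianization. -/
lemma fact_b23 : psi (bg 2 3) = psi (ag 1 2) := by
  have h7 := eqD7 1 2 le_rfl (by omega)
  have hc := eqC 1 2 le_rfl (by omega)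
  have : psi (bg 2 3) * psi (bg 1 3) = psi (bg 1 3) * psi (ag 1 2) := by
    rw [← h7, hc]
  exact hlp1 this

/-- Shift lemma for β-generators: `β i j = β (i+n) (j+n)` when `i ≥ 2`. -/
lemma fact_shift (n : ℕ) : ∀ i j, 2 ≤ i → i < j →
    psi (bg i j) = psi (bg (i + n) (j + n)) := by
  induction n with
  | zero => intro i j _ _; rfl
  | succ m ih =>
    intro i j h1 h2
    rw [ih i j h1 h2, eqD6 (i + m) (j + m) (by omega) (by omega)]
    rfl

/-- The abelianization of `Fbr` is generated by the images of `x 0`, `x 1`, `β 1 3`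
and `α 1 2`. -/
theorem fbr_abelianization_generators :
    Subgroup.closure {Abelianization.of (x 0), Abelianization.of (x 1),
      Abelianization.of (be 1 3), Abelianization.of (al 1 2)} =
      (⊤ : Subgroup (Abelianization Fbr)) := by
  set S : Subgroup (Abelianization Fbr) :=
    Subgroup.closure {Abelianization.of (x 0), Abelianization.of (x 1),
      Abelianization.of (be 1 3), Abelianization.of (al 1 2)} with hS
  have hx0 : Abelianization.of (x 0) ∈ S := Subgroup.subset_closure (by simp)
  have hx1 : Abelianization.of (x 1) ∈ S := Subgroup.subset_closure (by simp)
  have hb13 : Abelianization.of (be 1 3) ∈ S := Subgroup.subset_closure (by simp)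
  have ha12 : Abelianization.of (al 1 2) ∈ S := Subgroup.subset_closure (by simp)
  -- each generator's image is in `S`
  have key : ∀ g : FbrGen, psi (FreeGroup.of g) ∈ S := by
    intro g
    cases g with
    | x i =>
      show psi (xg i) ∈ S
      rcases Nat.eq_zero_or_pos i with h | h
      · rw [h, psi_xg]; exact hx0
      · rw [fact_x i h, psi_xg]; exact hx1
    | a i j hi hij =>
      have hag : FreeGroup.of (FbrGen.a i j hi hij) = ag i j := by
        rw [ag, dif_pos ⟨hi, hij⟩]
      rw [hag]
      rcases Nat.lt_or_ge j (i + 2) with h | h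
      · -- j = i + 1
        have : j = i + 1 := by omega
        subst this
        rw [fact_a1 i hi, psi_ag]
        exact ha12
      · rw [fact_a0 i j hi h]; exact one_mem S
    | b i j hi hij =>
      have hbg : FreeGroup.of (FbrGen.b i j hi hij) = bg i j := by
        rw [bg, dif_pos ⟨hi, hij⟩]
      rw [hbg]
      rcases Nat.eq_or_lt_of_le hi with h1 | h1
      · -- i = 1
        subst h1
        rcases Nat.lt_or_ge j 3 with h | h
        · have : j = 2 := by omega
          subst this
          rw [eqC 1 2 le_rfl (by omega), psi_bg, psi_ag]
          exact mul_mem hb13 ha12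
        · rw [fact_b13 j h, psi_bg]; exact hb13
      · -- i ≥ 2
        rcases Nat.lt_or_ge j (i + 2) with h | h
        · -- j = i + 1
          have hj : j = i + 1 := by omega
          subst hj
          have h23 := fact_shift (i - 2) 2 3 le_rfl (by omega)
          rw [show 2 + (i - 2) = i by omega, show 3 + (i - 2) = i + 1 by omega] at h23
          rw [← h23, fact_b23, psi_ag]
          exact ha12
        · -- j ≥ i + 2
          have hsh := fact_shift (i - 2) 2 (j - i + 2) le_rfl (by omega)
          rw [show 2 + (i - 2) = i by omega, show j - i + 2 + (i - 2) = j by omega] at hsh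
          rw [← hsh, fact_b2 (j - i + 2) (by omega)]
          exact one_mem S
  -- `psi` is surjective
  have hsurj : Function.Surjective psi := by
    intro y
    obtain ⟨z, rfl⟩ : ∃ z : Fbr, Abelianization.of z = y := Quot.exists_rep y
    obtain ⟨w, rfl⟩ := QuotientGroup.mk'_surjective (Subgroup.normalClosure fbrRels) z
    exact ⟨w, rfl⟩
  rw [eq_top_iff]
  intro y hy
  clear hy
  obtain ⟨w, rfl⟩ := hsurj y
  induction w using FreeGroup.induction_on with
  | C1 => exact one_mem S
  | of g => exact key g
  | inv_of g _ => rw [map_inv]; exact inv_mem (key g)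
  | mul u v hu hv => rw [map_mul]; exact mul_mem hu hv

end BrThompson
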